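/- For a natural number c, the following are equivalent: (1) c is a coordinate of some 3-color fair game (i.e., c ∈ C_3); (2) 9 does not divide 2c+1 and every prime factor of 2c+1 other than 3 is congruent to 1 mod 3. (Equivalently, 2c+1 belongs to P_1^{≥0} ∪ 3·P_1^{≥0}, where P_1^{≥0} is the set of natural numbers all of whose prime factors are congruent to 1 mod 3.) -/

import Mathlib

open Finset

def F {n : ℕ} (x : Fin n → ℤ) : ℤ :=
  (∑ i, x i) ^ 2 - (∑ i, x i) - 4 * ∑ i, ∑ j, if i < j then x i * x j else 0

/-- `C3` is the set of natural numbers occurring as a coordinate of some 3-color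
fair game. -/
def C3 : Set ℕ :=
  {c : ℕ | ∃ x : Fin 3 → ℤ, F x = 0 ∧ (∀ i, 0 ≤ x i) ∧ ∃ i, x i = (c : ℤ)}


lemma mod3_of_dvd (p : ℕ) (hp : p.Prime) (hp2 : p ≠ 2) (hp3 : p ≠ 3) (t : ℤ)
    (h : (p : ℤ) ∣ t ^ 2 + 3) : p % 3 = 1 := by
  haveI : Fact p.Prime := ⟨hp⟩
  have hx : ((t : ZMod p)) ^ 2 = -3 := by
    have h0 : ((t ^ 2 + 3 : ℤ) : ZMod p) = 0 := (ZMod.intCast_zmod_eq_zero_iff_dvd _ p).mpr h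
    push_cast at h0
    linear_combination h0
  have h2 : (2 : ZMod p) ≠ 0 := by
    intro h2
    have : (p : ℕ) ∣ 2 := (ZMod.natCast_eq_zero_iff 2 p).mp (by exact_mod_cast h2)
    exact hp2 ((Nat.prime_dvd_prime_iff_eq hp Nat.prime_two).mp this)
  have h2' : (2 : ZMod p) * (2 : ZMod p)⁻¹ = 1 := mul_inv_cancel₀ h2
  set z : ZMod p := ((t : ZMod p) - 1) * (2 : ZMod p)⁻¹ with hz
  have h2z : 2 * z = (t : ZMod p) - 1 := by
    calc 2 * z = ((t : ZMod p) - 1) * (2 * (2 : ZMod p)⁻¹) := by rw [hz]; ring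
    _ = _ := by rw [h2']; ring
  have h4 : (4 : ZMod p) * (z ^ 2 + z + 1) = 0 := by
    linear_combination (2 * z + (t : ZMod p) + 1) * h2z + hx
  have hzz : z ^ 2 + z + 1 = 0 := by
    rcases mul_eq_zero.mp h4 with h' | h'
    · exfalso; apply h2
      have h22 : (2 : ZMod p) ^ 2 = 0 := by linear_combination h'
      exact pow_eq_zero_iff (by norm_num : 2 ≠ 0) |>.mp h22
    · exact h'
  have hz1 : z ≠ 1 := by
    intro h1
    rw [h1] at hzz
    have h3 : ((3 : ℕ) : ZMod p) = 0 := by push_cast; linear_combination hzz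
    have : (p : ℕ) ∣ 3 := (ZMod.natCast_eq_zero_iff 3 p).mp h3
    exact hp3 ((Nat.prime_dvd_prime_iff_eq hp (by norm_num)).mp this)
  have hz0 : z ≠ 0 := by
    intro h0; rw [h0] at hzz; norm_num at hzz
  have hz3 : z ^ 3 = 1 := by linear_combination (z - 1) * hzz
  have hord : orderOf z = 3 := orderOf_eq_prime hz3 hz1
  have hdvd : orderOf z ∣ p - 1 := orderOf_dvd_of_pow_eq_one (ZMod.pow_card_sub_one_eq_one hz0)
  rw [hord] at hdvd
  obtain ⟨k, hk⟩ := hdvd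
  have := hp.two_le
  omega

lemma isSquare_neg3 (p : ℕ) (hp : p.Prime) (h1 : p % 3 = 1) : IsSquare (-3 : ZMod p) := by
  haveI : Fact p.Prime := ⟨hp⟩
  have hcard : 3 ∣ Fintype.card (ZMod p)ˣ := by
    rw [ZMod.card_units_eq_totient, Nat.totient_prime hp]
    have := hp.two_le; omega
  obtain ⟨z, hz⟩ := exists_prime_orderOf_dvd_card 3 hcard
  have hz3 : z ^ 3 = 1 := by rw [← hz]; exact pow_orderOf_eq_one z
  set y : ZMod p := (↑z : ZMod p) with hy
  have hy3 : y ^ 3 = 1 := by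
    rw [hy, ← Units.val_pow_eq_pow_val, hz3, Units.val_one]
  have hy1 : y ≠ 1 := by
    intro h
    have : z = 1 := Units.ext h
    rw [this] at hz; simp at hz
  have hyy : y ^ 2 + y + 1 = 0 := by
    have h : (y - 1) * (y ^ 2 + y + 1) = 0 := by linear_combination hy3
    rcases mul_eq_zero.mp h with h | h
    · exact absurd (by linear_combination h) hy1
    · exact h
  exact ⟨2 * y + 1, by linear_combination -4 * hyy⟩


-- lifting square roots of -3 modulo odd prime powers
lemma hensel_neg3 (p : ℕ) (hp : p.Prime) (hp2 : p ≠ 2) (hp3 : p ≠ 3) (h1 : p % 3 = 1)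
    (k : ℕ) : ∃ t : ℤ, ((p : ℤ)) ^ k ∣ t ^ 2 + 3 := by
  haveI : Fact p.Prime := ⟨hp⟩
  induction k with
  | zero => exact ⟨0, by simp⟩
  | succ k ih =>
    rcases Nat.eq_zero_or_pos k with rfl | hk
    · -- base case : exponent 1
      obtain ⟨r, hr⟩ : IsSquare (-3 : ZMod p) := by
        have hcard : 3 ∣ Fintype.card (ZMod p)ˣ := by
          rw [ZMod.card_units_eq_totient, Nat.totient_prime hp]
          have := hp.two_le; omega
        obtain ⟨z, hz⟩ := exists_prime_orderOf_dvd_card 3 hcard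
        have hz3 : z ^ 3 = 1 := by rw [← hz]; exact pow_orderOf_eq_one z
        have hy3 : (↑z : ZMod p) ^ 3 = 1 := by
          rw [← Units.val_pow_eq_pow_val, hz3, Units.val_one]
        have hy1 : (↑z : ZMod p) ≠ 1 := by
          intro h
          have : z = 1 := Units.ext h
          rw [this] at hz; simp at hz
        have hyy : (↑z : ZMod p) ^ 2 + (↑z : ZMod p) + 1 = 0 := by
          have h : ((↑z : ZMod p) - 1) * ((↑z : ZMod p) ^ 2 + (↑z : ZMod p) + 1) = 0 := by
            linear_combination hy3
          rcases mul_eq_zero.mp h with h | h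
          · exact absurd (by linear_combination h) hy1
          · exact h
        exact ⟨2 * (↑z : ZMod p) + 1, by linear_combination -4 * hyy⟩
      refine ⟨(r.val : ℤ), ?_⟩
      rw [pow_one, ← ZMod.intCast_zmod_eq_zero_iff_dvd]
      push_cast
      rw [ZMod.natCast_val, ZMod.cast_id]
      linear_combination -hr
    · -- inductive step
      obtain ⟨t, m, hm⟩ := ih
      have hpt : ¬ ((p : ℤ) ∣ t) := by
        intro hdvd
        have h3 : (p : ℤ) ∣ 3 := by
          have hP : (p : ℤ) ∣ t ^ 2 + 3 := by
            refine dvd_trans ?_ ⟨m, hm⟩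
            exact dvd_pow_self _ (by omega)
          have ht2 : (p : ℤ) ∣ t ^ 2 := dvd_pow hdvd (by norm_num)
          exact (dvd_add_right ht2).mp hP
        have : (p : ℕ) ∣ 3 := by exact_mod_cast h3
        exact hp3 ((Nat.prime_dvd_prime_iff_eq hp (by norm_num)).mp this)
      have h2t : ((2 * t : ℤ) : ZMod p) ≠ 0 := by
        rw [Ne, ZMod.intCast_zmod_eq_zero_iff_dvd]
        intro hdvd
        rcases (Int.Prime.dvd_mul' (by exact_mod_cast hp) hdvd) with h' | h'
        · have : (p : ℕ) ∣ 2 := by exact_mod_cast h'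
          exact hp2 ((Nat.prime_dvd_prime_iff_eq hp Nat.prime_two).mp this)
        · exact hpt h'
      set s : ℤ := ((((-(m : ZMod p)) * ((2 * t : ℤ) : ZMod p)⁻¹).val : ℕ) : ℤ) with hs
      have hps : (p : ℤ) ∣ m + 2 * t * s := by
        rw [← ZMod.intCast_zmod_eq_zero_iff_dvd]
        push_cast
        rw [hs]
        push_cast
        rw [ZMod.natCast_val, ZMod.cast_id]
        have := mul_inv_cancel₀ h2t
        push_cast at this ⊢
        calc (m : ZMod p) + (2 : ZMod p) * (t : ZMod p) * (-(m : ZMod p) * ((2 : ZMod p) * (t : ZMod p))⁻¹)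
            = (m : ZMod p) - (m : ZMod p) * (((2 : ZMod p) * (t : ZMod p)) * ((2 : ZMod p) * (t : ZMod p))⁻¹) := by ring
          _ = 0 := by rw [this]; ring
      obtain ⟨q, hq⟩ := hps
      refine ⟨t + s * (p : ℤ) ^ k, q + s ^ 2 * (p : ℤ) ^ (k - 1), ?_⟩
      have hkk : k - 1 + 1 = k := by omega
      have expand : (t + s * (p : ℤ) ^ k) ^ 2 + 3
          = t ^ 2 + 3 + (p : ℤ) ^ k * (2 * t * s) + ((p : ℤ) ^ k) ^ 2 * s ^ 2 := by ring
      have hsplit : (p : ℤ) ^ (k + 1) * (p : ℤ) ^ (k - 1) = ((p : ℤ) ^ k) ^ 2 := by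
        rw [← pow_add, ← pow_mul]
        congr 1
        omega
      rw [expand, hm]
      linear_combination (p : ℤ) ^ k * hq - s ^ 2 * hsplit


lemma crt_combine (a b : ℕ) (hab : Nat.Coprime a b)
    (ha : ∃ t : ℤ, (a : ℤ) ∣ t ^ 2 + 3) (hb : ∃ t : ℤ, (b : ℤ) ∣ t ^ 2 + 3) :
    ∃ t : ℤ, ((a * b : ℕ) : ℤ) ∣ t ^ 2 + 3 := by
  obtain ⟨t₁, ht₁⟩ := ha
  obtain ⟨t₂, ht₂⟩ := hb
  have hco : IsCoprime (a : ℤ) (b : ℤ) := by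
    rw [Int.isCoprime_iff_gcd_eq_one]
    simpa using hab
  obtain ⟨u, v, huv⟩ := id hco
  refine ⟨t₂ * (u * a) + t₁ * (v * b), ?_⟩
  push_cast
  have hda : (a : ℤ) ∣ (t₂ * (u * a) + t₁ * (v * b)) ^ 2 + 3 := by
    have hd1 : (a : ℤ) ∣ (t₂ * (u * a) + t₁ * (v * b)) - t₁ := ⟨u * (t₂ - t₁), by linear_combination t₁ * huv⟩
    have : (t₂ * (u * a) + t₁ * (v * b)) ^ 2 + 3
        = ((t₂ * (u * a) + t₁ * (v * b)) - t₁) * ((t₂ * (u * a) + t₁ * (v * b)) + t₁) + (t₁ ^ 2 + 3) := by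
      ring
    rw [this]
    exact dvd_add (hd1.mul_right _) ht₁
  have hdb : (b : ℤ) ∣ (t₂ * (u * a) + t₁ * (v * b)) ^ 2 + 3 := by
    have hd1 : (b : ℤ) ∣ (t₂ * (u * a) + t₁ * (v * b)) - t₂ := ⟨v * (t₁ - t₂), by linear_combination t₂ * huv⟩
    have : (t₂ * (u * a) + t₁ * (v * b)) ^ 2 + 3
        = ((t₂ * (u * a) + t₁ * (v * b)) - t₂) * ((t₂ * (u * a) + t₁ * (v * b)) + t₂) + (t₂ ^ 2 + 3) := by
      ring
    rw [this]
    exact dvd_add (hd1.mul_right _) ht₂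
  exact hco.mul_dvd hda hdb


lemma key_exists : ∀ w : ℕ, w % 2 = 1 → ¬ (9 ∣ w) →
    (∀ p : ℕ, p.Prime → p ∣ w → p ≠ 3 → p % 3 = 1) → ∃ t : ℤ, (w : ℤ) ∣ t ^ 2 + 3 := by
  intro w
  induction w using Nat.recOnPosPrimePosCoprime with
  | prime_pow p n hp hn =>
    intro hodd h9 hcond
    have hpp : p.Prime := Nat.prime_iff.mpr hp.prime
    have hp2 : p ≠ 2 := by
      rintro rfl
      have : 2 ∣ 2 ^ n := dvd_pow_self 2 hn.ne'
      omega
    by_cases hp3 : p = 3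
    · subst hp3
      have hn1 : n = 1 := by
        by_contra hne
        exact h9 (by calc (9 : ℕ) = 3 ^ 2 := by norm_num
                        _ ∣ 3 ^ n := pow_dvd_pow 3 (by omega))
      refine ⟨0, ?_⟩
      rw [hn1]
      norm_num
    · have h1 : p % 3 = 1 := hcond p hpp (dvd_pow_self p hn.ne') hp3
      obtain ⟨t, ht⟩ := hensel_neg3 p hpp hp2 hp3 h1 n
      exact ⟨t, by push_cast; exact ht⟩
  | zero => intro h; simp at h
  | one => exact fun _ _ _ => ⟨0, by norm_num⟩
  | coprime a b ha hb hab iha ihb =>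
    intro hodd h9 hcond
    have hsub : ∀ x y : ℕ, x ∣ y → y ∣ a * b → x % 2 = 1 ∧ ¬ (9 ∣ x) ∧
        (∀ p : ℕ, p.Prime → p ∣ x → p ≠ 3 → p % 3 = 1) := by
      intro x y hxy hyab
      have hx : x ∣ a * b := hxy.trans hyab
      refine ⟨?_, ?_, ?_⟩
      · rcases Nat.mod_two_eq_zero_or_one x with h | h
        · have h2 : 2 ∣ a * b := (Nat.dvd_of_mod_eq_zero h).trans hx
          omega
        · exact h
      · intro h9x
        exact h9 (h9x.trans hx)
      · intro p hppr hpx hp3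
        exact hcond p hppr (hpx.trans hx) hp3
    obtain ⟨ha1, ha2, ha3⟩ := hsub a a dvd_rfl (Dvd.intro b rfl)
    obtain ⟨hb1, hb2, hb3⟩ := hsub b b dvd_rfl (Dvd.intro_left a rfl)
    exact crt_combine a b hab (iha ha1 ha2 ha3) (ihb hb1 hb2 hb3)

lemma F_eq (x : Fin 3 → ℤ) : F x = (x 0 + x 1 + x 2) ^ 2 - (x 0 + x 1 + x 2)
    - 4 * (x 0 * x 1 + x 0 * x 2 + x 1 * x 2) := by
  simp [F, Fin.sum_univ_three]

-- generic coordinate divisibility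
lemma coord_dvd (a b d : ℤ) (hF : (a + b + d) ^ 2 - (a + b + d)
    - 4 * (a * b + a * d + b * d) = 0) : (2 * a + 1) ∣ (2 * b - 2 * d) ^ 2 + 3 :=
  ⟨2 * (2 * b + 1) + 2 * (2 * d + 1) - (2 * a + 1), by linear_combination 4 * hF⟩

/-- `c ∈ C_3` iff `9 ∤ 2c+1` and every prime factor of `2c+1` other than `3` is
`≡ 1 (mod 3)`, i.e. iff `2c+1 ∈ P₁^{≥0} ∪ 3·P₁^{≥0}`. -/
theorem stmt_13 (c : ℕ) :
    c ∈ C3 ↔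
      ¬ (9 ∣ (2 * c + 1)) ∧
        ∀ p : ℕ, p.Prime → p ∣ (2 * c + 1) → p ≠ 3 → p % 3 = 1 := by
  constructor
  · rintro ⟨x, hF, hpos, i, hi⟩
    rw [F_eq] at hF
    -- get t with (2c+1 : ℤ) ∣ t^2+3
    have hdvd : ∃ t : ℤ, ((2 * c + 1 : ℕ) : ℤ) ∣ t ^ 2 + 3 := by
      have hcast : ((2 * c + 1 : ℕ) : ℤ) = 2 * (c : ℤ) + 1 := by push_cast; ring
      fin_cases i <;> rw [hcast, ← hi]
      · exact ⟨_, coord_dvd (x 0) (x 1) (x 2) (by linear_combination hF)⟩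
      · exact ⟨_, coord_dvd (x 1) (x 0) (x 2) (by linear_combination hF)⟩
      · exact ⟨_, coord_dvd (x 2) (x 0) (x 1) (by linear_combination hF)⟩
    obtain ⟨t, ht⟩ := hdvd
    constructor
    · intro h9
      have h9' : (9 : ℤ) ∣ t ^ 2 + 3 := by
        refine dvd_trans ?_ ht
        exact_mod_cast Int.natCast_dvd_natCast.mpr h9
      have h0 : ((t ^ 2 + 3 : ℤ) : ZMod 9) = 0 := (ZMod.intCast_zmod_eq_zero_iff_dvd _ 9).mpr h9'
      push_cast at h0
      have : ∀ r : ZMod 9, r ^ 2 + 3 ≠ 0 := by decide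
      exact this _ h0
    · intro p hp hpd hp3
      have hp2 : p ≠ 2 := by
        rintro rfl
        omega
      refine mod3_of_dvd p hp hp2 hp3 t (dvd_trans ?_ ht)
      exact_mod_cast Int.natCast_dvd_natCast.mpr hpd
  · rintro ⟨h9, hcond⟩
    obtain ⟨t₀, ht₀⟩ := key_exists (2 * c + 1) (by omega) h9 hcond
    set W : ℤ := 2 * (c : ℤ) + 1 with hWdef
    have hW0 : W ∣ t₀ ^ 2 + 3 := by
      have : ((2 * c + 1 : ℕ) : ℤ) = W := by rw [hWdef]; push_cast; ring
      rwa [this] at ht₀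
    have hWodd : W % 2 = 1 := by omega
    -- choose an odd nonneg square root
    obtain ⟨t, htodd, ht1, hW1⟩ : ∃ t : ℤ, t % 2 = 1 ∧ 1 ≤ t ∧ W ∣ t ^ 2 + 3 := by
      rcases Int.emod_two_eq t₀ with h | h
      · -- t₀ even, use |t₀ + W|
        refine ⟨|t₀ + W|, ?_, ?_, ?_⟩
        · rcases abs_choice (t₀ + W) with habs | habs <;> omega
        · have : t₀ + W ≠ 0 := by omega
          have := abs_pos.mpr this
          rcases abs_choice (t₀ + W) with habs | habs <;> omega
        · rw [sq_abs]
          obtain ⟨m, hm⟩ := hW0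
          exact ⟨m + 2 * t₀ + W, by linear_combination hm⟩
      · refine ⟨|t₀|, ?_, ?_, ?_⟩
        · rcases abs_choice t₀ with habs | habs <;> omega
        · have : t₀ ≠ 0 := by omega
          have := abs_pos.mpr this
          omega
        · rw [sq_abs]; exact hW0
    obtain ⟨k, hk⟩ : ∃ k, t = 2 * k + 1 := ⟨(t - 1) / 2, by omega⟩
    have hk0 : 0 ≤ k := by omega
    have h4 : t ^ 2 + 3 = 4 * (k ^ 2 + k + 1) := by rw [hk]; ring
    have hco2 : IsCoprime (2 : ℤ) W := by
      rw [Int.isCoprime_iff_gcd_eq_one]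
      have h1 : W.natAbs % 2 = 1 := by omega
      have h2 : Nat.Coprime 2 W.natAbs := Nat.coprime_two_left.mpr (Nat.odd_iff.mpr h1)
      simpa [Int.gcd] using h2
    have hco4 : IsCoprime (4 : ℤ) W := by
      have h : IsCoprime ((2 : ℤ) ^ 2) W := hco2.pow_left
      norm_num at h
      exact h
    have hWm : W ∣ k ^ 2 + k + 1 := by
      have h44 : W ∣ 4 * (k ^ 2 + k + 1) := by rw [← h4]; exact hW1
      exact (hco4.symm).dvd_of_dvd_mul_left h44
    obtain ⟨v, hv⟩ := hWm
    have hm1 : 1 ≤ k ^ 2 + k + 1 := by nlinarith [sq_nonneg (2 * k + 1)]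
    have hWpos : 0 < W := by omega
    have hv1 : 1 ≤ v := by
      by_contra hcon
      push_neg at hcon
      have hv0 : v ≤ 0 := by omega
      have : W * v ≤ 0 := mul_nonpos_of_nonneg_of_nonpos (le_of_lt hWpos) hv0
      linarith [hv ▸ hm1]
    have hvodd : v % 2 = 1 := by
      have heven : Even (k * (k + 1)) := Int.even_mul_succ_self k
      have hodd : Odd (k ^ 2 + k + 1) := by
        have : k ^ 2 + k + 1 = k * (k + 1) + 1 := by ring
        rw [this]
        exact Even.add_one heven
      rw [hv] at hodd
      rcases Int.odd_mul.mp hodd with ⟨_, hov⟩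
      exact Int.odd_iff.mp hov
    obtain ⟨b, hb⟩ : ∃ b, v = 2 * b + 1 := ⟨(v - 1) / 2, by omega⟩
    have hb0 : 0 ≤ b := by omega
    have ht2 : t ^ 2 + 3 = 4 * (W * v) := by rw [h4, hv]
    have h5 : (W + v - t) * (W + v + t) = (W - v) ^ 2 + 3 := by linear_combination -ht2
    have hupos : 0 < W + v - t := by nlinarith [sq_nonneg (W - v), h5]
    set d : ℤ := b + (c : ℤ) - k with hdd
    have hd0 : 0 ≤ d := by omega
    refine ⟨![(c : ℤ), b, d], ?_, ?_, ⟨0, rfl⟩⟩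
    · rw [F_eq]
      simp only [Matrix.cons_val_zero, Matrix.cons_val_one, Matrix.head_cons,
        Matrix.cons_val_two, Matrix.tail_cons]
      rw [hk, hb, hWdef] at ht2
      have hkk : k = b + (c : ℤ) - d := by omega
      rw [hkk] at ht2
      have h4F : (4 : ℤ) * (((c : ℤ) + b + d) ^ 2 - ((c : ℤ) + b + d)
          - 4 * ((c : ℤ) * b + (c : ℤ) * d + b * d)) = 0 := by linear_combination ht2
      linarith
    · intro i
      fin_cases i <;> simp [hb0, hd0]
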